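/- Let (ω_l)_{l∈ℕ} be i.i.d. Bernoulli(p), p ∈ (0,1), α ∈ (1,∞), and S_N(ω) = ∑_{0<j_1<...<j_N, ω_{j_1}=...=ω_{j_N}=1} ∏_{i=1}^N (j_i-j_{i-1})^{-α}. Then almost surely, for every β ∈ (1/α, 1], limsup_{N→∞} (1/N) log S_N(ω) ≤ (1/β)(log p + log ζ(αβ)). -/

import Mathlib

open MeasureTheory ProbabilityTheory Filter
open scoped ENNReal Classical

noncomputable section

/-- `j_{i-1}`, with the convention `j_0 = 0`. -/
def prevJ {N : ℕ} (j : Fin N → ℕ) (i : Fin N) : ℕ :=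
  if _h : (i : ℕ) = 0 then 0
  else j ⟨(i : ℕ) - 1, lt_of_le_of_lt (Nat.sub_le _ _) i.2⟩

/-- The renewal sum `S_N(ω) = ∑_{0<j_1<⋯<j_N, ω_{j_i}=1 ∀i} ∏_i (j_i-j_{i-1})^{-α}`. -/
def SN (α : ℝ) (N : ℕ) (ω : ℕ → Bool) : ℝ≥0∞ :=
  ∑' j : Fin N → ℕ,
    if (∀ i, prevJ j i < j i) ∧ (∀ i, ω (j i) = true)
    then ∏ i, ((j i - prevJ j i : ℕ) : ℝ≥0∞) ^ (-α) else 0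

/-- Riemann's `ζ(s) = ∑_{n ≥ 1} n^{-s}`, real-valued. -/
def zetaR (s : ℝ) : ℝ := ∑' n : ℕ, ((n + 1 : ℕ) : ℝ) ^ (-s)

namespace LimsupSNAux

/-! ### Basic facts about `prevJ` -/

lemma prevJ_zero {N : ℕ} (j : Fin N → ℕ) (i : Fin N) (hi : (i : ℕ) = 0) :
    prevJ j i = 0 := by rw [prevJ, dif_pos hi]

lemma prevJ_succ {N : ℕ} (j : Fin N → ℕ) (i : Fin N) (m : ℕ) (hm : m < N)
    (hi : (i : ℕ) = m + 1) : prevJ j i = j ⟨m, hm⟩ := by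
  rw [prevJ, dif_neg (by omega)]
  congr 1
  exact Fin.ext (by simp [hi])

/-! ### Facts about `zetaR` -/

lemma summable_zeta {s : ℝ} (hs : 1 < s) :
    Summable (fun n : ℕ => ((n + 1 : ℕ) : ℝ) ^ (-s)) := by
  have h : Summable (fun n : ℕ => ((n : ℝ)) ^ (-s)) :=
    Real.summable_nat_rpow.2 (by linarith)
  have h2 : (fun n : ℕ => ((n + 1 : ℕ) : ℝ) ^ (-s))
      = (fun n : ℕ => ((n : ℝ)) ^ (-s)) ∘ (fun n => n + 1) := by
    funext n; simp [Function.comp]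
  rw [h2]
  exact h.comp_injective (add_left_injective 1)

lemma one_le_zetaR {s : ℝ} (hs : 1 < s) : 1 ≤ zetaR s := by
  have h := Summable.le_tsum (summable_zeta hs) 0
    (fun i _ => Real.rpow_nonneg (by positivity) _)
  simpa [zetaR] using h

lemma zetaR_pos {s : ℝ} (hs : 1 < s) : 0 < zetaR s :=
  lt_of_lt_of_le one_pos (one_le_zetaR hs)

/-- `ℝ≥0∞`-valued zeta. -/
def ZE (s : ℝ) : ℝ≥0∞ := ∑' n : ℕ, ((n + 1 : ℕ) : ℝ≥0∞) ^ (-s)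

lemma ZE_term (s : ℝ) (n : ℕ) :
    ((n + 1 : ℕ) : ℝ≥0∞) ^ (-s) = ENNReal.ofReal (((n + 1 : ℕ) : ℝ) ^ (-s)) := by
  rw [← ENNReal.ofReal_rpow_of_pos (by positivity), ENNReal.ofReal_natCast]

lemma ZE_eq {s : ℝ} (hs : 1 < s) : ZE s = ENNReal.ofReal (zetaR s) := by
  rw [ZE, zetaR, ENNReal.ofReal_tsum_of_nonneg
    (fun n => Real.rpow_nonneg (by positivity) _) (summable_zeta hs)]
  exact tsum_congr (fun n => ZE_term s n)

lemma ZE_ne_top {s : ℝ} (hs : 1 < s) : ZE s ≠ ∞ := by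
  rw [ZE_eq hs]; exact ENNReal.ofReal_ne_top

/-! ### `ℝ≥0∞` analysis lemmas -/

/-- Subadditivity of `x ↦ x^β` on `ℝ≥0∞` tsums, for `0 < β ≤ 1`. -/
lemma tsum_rpow_le {ι : Type*} (f : ι → ℝ≥0∞) {β : ℝ} (h0 : 0 < β) (h1 : β ≤ 1) :
    (∑' i, f i) ^ β ≤ ∑' i, f i ^ β := by
  have hfin : ∀ s : Finset ι, (∑ i ∈ s, f i) ^ β ≤ ∑ i ∈ s, f i ^ β := by
    intro s
    induction s using Finset.induction_on with
    | empty => simp [ENNReal.zero_rpow_of_pos h0]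
    | @insert a s' hnotmem ih =>
      rw [Finset.sum_insert hnotmem, Finset.sum_insert hnotmem]
      exact (ENNReal.rpow_add_le_add_rpow _ _ h0.le h1).trans (by gcongr)
  rw [ENNReal.tsum_eq_iSup_sum]
  rw [← ENNReal.le_rpow_inv_iff h0]
  refine iSup_le fun s => ?_
  rw [ENNReal.le_rpow_inv_iff h0]
  exact (hfin s).trans (ENNReal.sum_le_tsum s)

/-- `∑' (g : Fin N → ℕ), ∏ i, f (g i) = (∑' n, f n) ^ N`. -/
lemma tsum_pi_prod (f : ℕ → ℝ≥0∞) : ∀ N : ℕ,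
    (∑' g : Fin N → ℕ, ∏ i, f (g i)) = (∑' n, f n) ^ N := by
  intro N
  induction N with
  | zero =>
    rw [tsum_eq_single (fun i => i.elim0) (fun b hb => absurd (Subsingleton.elim b _) hb)]
    simp
  | succ n ih =>
    have he := Equiv.tsum_eq (Fin.consEquiv (fun _ : Fin (n+1) => ℕ))
      (fun g : Fin (n+1) → ℕ => ∏ i, f (g i))
    rw [← he, ENNReal.tsum_prod']
    have hx : ∀ (x : ℕ) (g : Fin n → ℕ),
        (∏ i, f ((Fin.consEquiv (fun _ : Fin (n+1) => ℕ)) (x, g) i))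
          = f x * ∏ i : Fin n, f (g i) := by
      intro x g
      rw [Fin.prod_univ_succ]
      simp [Fin.consEquiv]
    simp_rw [hx, ENNReal.tsum_mul_left]
    rw [ENNReal.tsum_mul_right, ih, pow_succ, mul_comm]

/-! ### The gap parametrization of increasing tuples -/

/-- Partial sums of gaps. -/
def pSum {N : ℕ} (g : Fin N → ℕ) (n : ℕ) : ℕ :=
  ∑ k ∈ Finset.range n, (if h : k < N then g ⟨k, h⟩ + 1 else 0)

/-- The strictly increasing tuple with gaps `g i + 1`. -/
def toJ {N : ℕ} (g : Fin N → ℕ) : Fin N → ℕ := fun i => pSum g ((i : ℕ) + 1)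

lemma pSum_succ {N : ℕ} (g : Fin N → ℕ) {n : ℕ} (hn : n < N) :
    pSum g (n + 1) = pSum g n + (g ⟨n, hn⟩ + 1) := by
  rw [pSum, Finset.sum_range_succ, dif_pos hn]; rfl

lemma toJ_apply {N : ℕ} (g : Fin N → ℕ) (i : Fin N) :
    toJ g i = pSum g (i : ℕ) + (g i + 1) := by
  rw [toJ, pSum_succ g i.2, Fin.eta]

lemma prevJ_toJ_add {N : ℕ} (g : Fin N → ℕ) (i : Fin N) :
    prevJ (toJ g) i + (g i + 1) = toJ g i := by
  rw [toJ_apply]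
  by_cases h : (i : ℕ) = 0
  · rw [prevJ_zero _ _ h, h]
    simp [pSum]
  · obtain ⟨m, hm⟩ : ∃ m, (i : ℕ) = m + 1 := ⟨(i : ℕ) - 1, by omega⟩
    have hmN : m < N := by have := i.2; omega
    rw [prevJ_succ (toJ g) i m hmN hm, toJ, hm]

lemma prevJ_lt_toJ {N : ℕ} (g : Fin N → ℕ) (i : Fin N) : prevJ (toJ g) i < toJ g i := by
  have := prevJ_toJ_add g i; omega

lemma gap_toJ {N : ℕ} (g : Fin N → ℕ) (i : Fin N) :
    toJ g i - prevJ (toJ g) i = g i + 1 := by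
  have := prevJ_toJ_add g i; omega

lemma toJ_injective {N : ℕ} : Function.Injective (toJ (N := N)) := by
  intro g g' h
  funext i
  have h1 := prevJ_toJ_add g i
  have h2 := prevJ_toJ_add g' i
  rw [h] at h1
  omega

lemma strictMono_of_prevJ_lt {N : ℕ} {j : Fin N → ℕ} (hj : ∀ i, prevJ j i < j i) :
    StrictMono j := by
  have key : ∀ n : ℕ, ∀ h : n < N, ∀ a : Fin N, (a : ℕ) ≤ n → j a ≤ j ⟨n, h⟩ := by
    intro n
    induction n with
    | zero =>
      intro h a ha
      have : a = ⟨0, h⟩ := Fin.ext (by simpa using ha)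
      rw [this]
    | succ m ih =>
      intro h a ha
      rcases Nat.lt_or_ge (a : ℕ) (m + 1) with hlt | hge
      · have hm : m < N := by omega
        have h1 := ih hm a (by omega)
        have h2 := hj ⟨m + 1, h⟩
        rw [prevJ_succ j _ m hm rfl] at h2
        omega
      · have : a = ⟨m + 1, h⟩ := Fin.ext (by simp; omega)
        rw [this]
  intro a b hab
  have hab' : (a : ℕ) < (b : ℕ) := hab
  have hbne : (b : ℕ) ≠ 0 := by omega
  obtain ⟨m, hm⟩ : ∃ m, (b : ℕ) = m + 1 := ⟨(b : ℕ) - 1, by omega⟩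
  have hmN : m < N := by have := b.2; omega
  have hb := hj b
  rw [prevJ_succ j b m hmN hm] at hb
  have : j a ≤ j ⟨m, hmN⟩ := key m hmN a (by omega)
  omega

lemma mem_range_toJ {N : ℕ} {j : Fin N → ℕ} (hj : ∀ i, prevJ j i < j i) :
    ∃ g, toJ g = j := by
  refine ⟨fun i => j i - prevJ j i - 1, ?_⟩
  set g : Fin N → ℕ := fun i => j i - prevJ j i - 1 with hg
  funext i
  have key : ∀ n : ℕ, ∀ h : n < N, toJ g ⟨n, h⟩ = j ⟨n, h⟩ := by
    intro n
    induction n with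
    | zero =>
      intro h
      have hp0 : prevJ j (⟨0, h⟩ : Fin N) = 0 := prevJ_zero _ _ rfl
      have hj0 := hj ⟨0, h⟩
      rw [hp0] at hj0
      have hadd := prevJ_toJ_add g (⟨0, h⟩ : Fin N)
      rw [prevJ_zero _ _ rfl] at hadd
      have hgv : g ⟨0, h⟩ = j ⟨0, h⟩ - prevJ j ⟨0, h⟩ - 1 := rfl
      rw [hgv, hp0] at hadd
      omega
    | succ m ih =>
      intro h
      have hm : m < N := by omega
      have hpm : prevJ j (⟨m + 1, h⟩ : Fin N) = j ⟨m, hm⟩ := prevJ_succ j _ m hm rfl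
      have hadd := prevJ_toJ_add g (⟨m + 1, h⟩ : Fin N)
      rw [prevJ_succ (toJ g) _ m hm rfl, ih hm] at hadd
      have hgv : g ⟨m + 1, h⟩ = j ⟨m + 1, h⟩ - prevJ j ⟨m + 1, h⟩ - 1 := rfl
      rw [hgv, hpm] at hadd
      have hjm := hj ⟨m + 1, h⟩
      rw [hpm] at hjm
      omega
  simpa using key i.1 i.2

/-- The combinatorial identity: summing over increasing tuples factorizes. -/
lemma tsum_incr (s : ℝ) (N : ℕ) :
    (∑' j : Fin N → ℕ, if (∀ i, prevJ j i < j i)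
      then ∏ i, ((j i - prevJ j i : ℕ) : ℝ≥0∞) ^ (-s) else 0) = ZE s ^ N := by
  rw [show ZE s = ∑' n : ℕ, ((n + 1 : ℕ) : ℝ≥0∞) ^ (-s) from rfl]
  rw [← tsum_pi_prod (fun n => ((n + 1 : ℕ) : ℝ≥0∞) ^ (-s)) N]
  rw [← Function.Injective.tsum_eq (toJ_injective (N := N)) (f := fun j =>
      if (∀ i, prevJ j i < j i) then ∏ i, ((j i - prevJ j i : ℕ) : ℝ≥0∞) ^ (-s) else 0)
      (by
        intro j hj
        rw [Function.mem_support] at hj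
        by_cases hcond : ∀ i, prevJ j i < j i
        · exact mem_range_toJ hcond
        · exact absurd (if_neg hcond) hj)]
  refine tsum_congr fun g => ?_
  rw [if_pos (fun i => prevJ_lt_toJ g i)]
  refine Finset.prod_congr rfl fun i _ => ?_
  rw [gap_toJ]


/-! ### Basic bounds on `SN` -/

lemma SN_le_ZE_pow (α : ℝ) (N : ℕ) (ω : ℕ → Bool) : SN α N ω ≤ ZE α ^ N := by
  rw [SN, ← tsum_incr α N]
  refine ENNReal.tsum_le_tsum fun j => ?_
  by_cases h : (∀ i, prevJ j i < j i) ∧ (∀ i, ω (j i) = true)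
  · rw [if_pos h, if_pos h.1]
  · rw [if_neg h]; exact zero_le

lemma SN_ne_top {α : ℝ} (hα : 1 < α) (N : ℕ) (ω : ℕ → Bool) : SN α N ω ≠ ∞ :=
  ne_top_of_le_ne_top (ENNReal.pow_ne_top (ZE_ne_top hα)) (SN_le_ZE_pow α N ω)

section Prob

variable {Ω : Type*} [MeasurableSpace Ω]

lemma ite_eq_indicator {N : ℕ} (X : ℕ → Ω → Bool) (j : Fin N → ℕ) (P : Prop) [Decidable P] (c : ℝ≥0∞) :
    (fun a => if (P ∧ ∀ i, X (j i) a = true) then c else 0)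
      = (⋂ i, (X (j i)) ⁻¹' {true}).indicator (fun _ => if P then c else 0) := by
  funext a
  by_cases hmem : a ∈ ⋂ i, (X (j i)) ⁻¹' {true}
  · rw [Set.indicator_of_mem hmem]
    simp only [Set.mem_iInter, Set.mem_preimage, Set.mem_singleton_iff] at hmem
    by_cases hc : P
    · rw [if_pos ⟨hc, hmem⟩, if_pos hc]
    · rw [if_neg (fun hh => hc hh.1), if_neg hc]
  · rw [Set.indicator_of_notMem hmem, if_neg]
    intro hh
    exact hmem (by simpa [Set.mem_iInter] using hh.2)

lemma measurable_inter {N : ℕ} (X : ℕ → Ω → Bool) (hmeas : ∀ l, Measurable (X l))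
    (j : Fin N → ℕ) : MeasurableSet (⋂ i, (X (j i)) ⁻¹' {true}) :=
  MeasurableSet.iInter fun i => (hmeas (j i)) (measurableSet_singleton true)

lemma measurable_SN (X : ℕ → Ω → Bool) (hmeas : ∀ l, Measurable (X l)) (α : ℝ) (N : ℕ) :
    Measurable (fun a => SN α N (fun l => X l a)) := by
  rw [show (fun a => SN α N (fun l => X l a)) = fun a => ∑' j : Fin N → ℕ,
      if (∀ i, prevJ j i < j i) ∧ (∀ i, X (j i) a = true)
      then ∏ i, ((j i - prevJ j i : ℕ) : ℝ≥0∞) ^ (-α) else 0 from rfl]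
  refine Measurable.ennreal_tsum fun j => ?_
  rw [show (fun a => if (∀ i, prevJ j i < j i) ∧ (∀ i, X (j i) a = true)
      then ∏ i, ((j i - prevJ j i : ℕ) : ℝ≥0∞) ^ (-α) else 0)
    = (⋂ i, (X (j i)) ⁻¹' {true}).indicator (fun _ => if (∀ i, prevJ j i < j i)
      then ∏ i, ((j i - prevJ j i : ℕ) : ℝ≥0∞) ^ (-α) else 0) from ite_eq_indicator X j _ _]
  exact measurable_const.indicator (measurable_inter X hmeas j)

lemma meas_inter_eq (μ : Measure Ω) [IsProbabilityMeasure μ] (X : ℕ → Ω → Bool)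
    (hindep : iIndepFun X μ)
    (p : ℝ) (hX : ∀ l, μ {a | X l a = true} = ENNReal.ofReal p)
    {N : ℕ} {j : Fin N → ℕ} (hjm : Function.Injective j) :
    μ (⋂ i, (X (j i)) ⁻¹' {true}) = ENNReal.ofReal p ^ N := by
  have hset : (⋂ i, (X (j i)) ⁻¹' {true})
      = ⋂ l ∈ Finset.image j Finset.univ, (X l) ⁻¹' {true} := by
    ext a
    simp [Finset.mem_image]
  rw [hset, hindep.meas_biInter (fun l _ => ⟨{true}, measurableSet_singleton true, rfl⟩)]
  have hfac : ∀ l ∈ Finset.image j Finset.univ, μ ((X l) ⁻¹' {true}) = ENNReal.ofReal p :=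
    fun l _ => hX l
  rw [Finset.prod_congr rfl hfac, Finset.prod_const,
    Finset.card_image_of_injective _ hjm, Finset.card_univ, Fintype.card_fin]

/-- The fractional moment bound `E[S_N^β] ≤ (p ζ(αβ))^N`. -/
lemma lintegral_SN_rpow_le (μ : Measure Ω) [IsProbabilityMeasure μ] (X : ℕ → Ω → Bool)
    (hmeas : ∀ l, Measurable (X l)) (hindep : iIndepFun X μ)
    (p : ℝ) (hX : ∀ l, μ {a | X l a = true} = ENNReal.ofReal p)
    (α β : ℝ) (hb0 : 0 < β) (hb1 : β ≤ 1) (N : ℕ) :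
    ∫⁻ a, (SN α N (fun l => X l a)) ^ β ∂μ ≤ (ENNReal.ofReal p * ZE (α * β)) ^ N := by
  set C : (Fin N → ℕ) → ℝ≥0∞ := fun j => ∏ i, ((j i - prevJ j i : ℕ) : ℝ≥0∞) ^ (-(α * β))
    with hC
  have hfac : ∀ (j : Fin N → ℕ) (i : Fin N),
      (((j i - prevJ j i : ℕ) : ℝ≥0∞) ^ (-α)) ^ β
        = ((j i - prevJ j i : ℕ) : ℝ≥0∞) ^ (-(α * β)) := by
    intro j i
    rw [← ENNReal.rpow_mul, neg_mul]
  have hpt : ∀ a, (SN α N (fun l => X l a)) ^ β ≤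
      ∑' j : Fin N → ℕ, if (∀ i, prevJ j i < j i) ∧ (∀ i, X (j i) a = true)
        then C j else 0 := by
    intro a
    refine (tsum_rpow_le _ hb0 hb1).trans ?_
    refine ENNReal.tsum_le_tsum fun j => ?_
    by_cases h : (∀ i, prevJ j i < j i) ∧ (∀ i, X (j i) a = true)
    · rw [if_pos h, if_pos h, ← ENNReal.prod_rpow_of_nonneg hb0.le]
      exact le_of_eq (Finset.prod_congr rfl fun i _ => hfac j i)
    · rw [if_neg h, if_neg h, ENNReal.zero_rpow_of_pos hb0]
  have hmeasj : ∀ j : Fin N → ℕ, AEMeasurable (fun a =>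
      if (∀ i, prevJ j i < j i) ∧ (∀ i, X (j i) a = true) then C j else 0) μ := by
    intro j
    rw [show (fun a => if (∀ i, prevJ j i < j i) ∧ (∀ i, X (j i) a = true)
        then C j else 0)
      = (⋂ i, (X (j i)) ⁻¹' {true}).indicator (fun _ => if (∀ i, prevJ j i < j i)
        then C j else 0) from ite_eq_indicator X j _ _]
    exact (measurable_const.indicator (measurable_inter X hmeas j)).aemeasurable
  calc ∫⁻ a, (SN α N (fun l => X l a)) ^ β ∂μ
      ≤ ∫⁻ a, ∑' j : Fin N → ℕ, (if (∀ i, prevJ j i < j i) ∧ (∀ i, X (j i) a = true)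
          then C j else 0) ∂μ := lintegral_mono hpt
    _ = ∑' j : Fin N → ℕ, ∫⁻ a, (if (∀ i, prevJ j i < j i) ∧ (∀ i, X (j i) a = true)
          then C j else 0) ∂μ := lintegral_tsum hmeasj
    _ = ∑' j : Fin N → ℕ, (if (∀ i, prevJ j i < j i) then C j else 0)
          * ENNReal.ofReal p ^ N := by
        refine tsum_congr fun j => ?_
        rw [show (fun a => if (∀ i, prevJ j i < j i) ∧ (∀ i, X (j i) a = true)
            then C j else 0)
          = (⋂ i, (X (j i)) ⁻¹' {true}).indicator (fun _ => if (∀ i, prevJ j i < j i)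
            then C j else 0) from ite_eq_indicator X j _ _,
          lintegral_indicator_const (measurable_inter X hmeas j)]
        by_cases h : ∀ i, prevJ j i < j i
        · rw [meas_inter_eq μ X hindep p hX (strictMono_of_prevJ_lt h).injective]
        · rw [if_neg h, zero_mul, zero_mul]
    _ = (ENNReal.ofReal p * ZE (α * β)) ^ N := by
        rw [ENNReal.tsum_mul_right, tsum_incr (α * β) N, mul_pow, mul_comm]


/-! ### Lower bound on `SN` from a sequence of renewal points -/

lemma telescope_nat {t : ℕ → ℕ} (hmono : Monotone t) :
    ∀ N : ℕ, 1 ≤ N →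
      (∑ k ∈ Finset.range N, (t k - (if k = 0 then 0 else t (k - 1)))) = t (N - 1) := by
  intro N
  induction N with
  | zero => intro h; omega
  | succ n ih =>
    intro _
    rcases Nat.eq_zero_or_pos n with rfl | hn
    · simp
    · rw [Finset.sum_range_succ, ih hn, if_neg (by omega : n ≠ 0)]
      have h1 : t (n - 1) ≤ t n := hmono (by omega)
      simp only [Nat.add_sub_cancel]
      omega

lemma log_SN_lower {α : ℝ} (hα : 0 < α) {ω : ℕ → Bool} {N : ℕ} (hN : 1 ≤ N)
    (htop : SN α N ω ≠ ∞) {t : ℕ → ℕ} (ht : StrictMono t)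
    (ht0 : 1 ≤ t 0) (htω : ∀ k, ω (t k) = true) :
    0 < (SN α N ω).toReal ∧
      -(α * N * Real.log ((t (N - 1) : ℝ) / N)) ≤ Real.log ((SN α N ω).toReal) := by
  have hN0 : (0:ℝ) < N := by exact_mod_cast hN
  set j : Fin N → ℕ := fun i => t (i : ℕ) with hj
  have hprev : ∀ i : Fin N, prevJ j i = if (i : ℕ) = 0 then 0 else t ((i : ℕ) - 1) := by
    intro i
    by_cases h : (i : ℕ) = 0
    · rw [prevJ_zero _ _ h, if_pos h]
    · obtain ⟨m, hm⟩ : ∃ m, (i : ℕ) = m + 1 := ⟨(i : ℕ) - 1, by omega⟩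
      have hmN : m < N := by have := i.2; omega
      rw [prevJ_succ j i m hmN hm, if_neg h, hm]
      simp [hj]
  have hlt : ∀ i, prevJ j i < j i := by
    intro i
    rw [hprev i]
    by_cases h : (i : ℕ) = 0
    · rw [if_pos h]
      exact lt_of_lt_of_le ht0 (ht.monotone (Nat.zero_le _))
    · rw [if_neg h]
      exact ht (by omega)
  have hle : (∏ i, ((j i - prevJ j i : ℕ) : ℝ≥0∞) ^ (-α)) ≤ SN α N ω := by
    rw [SN]
    have h := ENNReal.le_tsum (f := fun j' : Fin N → ℕ =>
      if (∀ i, prevJ j' i < j' i) ∧ (∀ i, ω (j' i) = true)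
      then ∏ i, ((j' i - prevJ j' i : ℕ) : ℝ≥0∞) ^ (-α) else 0) j
    rwa [if_pos ⟨hlt, fun i => htω (i : ℕ)⟩] at h
  set G : ℝ := ∏ i : Fin N, ((j i - prevJ j i : ℕ) : ℝ) with hG
  have hGpos : 0 < G := Finset.prod_pos fun i _ => by
    have h1 : 0 < j i - prevJ j i := by have := hlt i; omega
    exact Nat.cast_pos.mpr h1
  have hprod : (∏ i, ((j i - prevJ j i : ℕ) : ℝ≥0∞) ^ (-α)) = ENNReal.ofReal (G ^ (-α)) := by
    rw [hG, ← Real.finset_prod_rpow _ _ (fun i _ => Nat.cast_nonneg _) (-α),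
      ENNReal.ofReal_prod_of_nonneg (fun i _ => Real.rpow_nonneg (Nat.cast_nonneg _) _)]
    refine Finset.prod_congr rfl fun i _ => ?_
    have h1 : 0 < j i - prevJ j i := by have := hlt i; omega
    rw [← ENNReal.ofReal_rpow_of_pos (Nat.cast_pos.mpr h1), ENNReal.ofReal_natCast]
  have hofle : ENNReal.ofReal (G ^ (-α)) ≤ SN α N ω := hprod ▸ hle
  have hSNpos : 0 < (SN α N ω).toReal := by
    refine ENNReal.toReal_pos (fun h0 => ?_) htop
    rw [h0, le_zero_iff, ENNReal.ofReal_eq_zero] at hofle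
    exact absurd hofle (not_le.2 (Real.rpow_pos_of_pos hGpos _))
  have htoReal : G ^ (-α) ≤ (SN α N ω).toReal := (ENNReal.ofReal_le_iff_le_toReal htop).1 hofle
  have hlog1 : Real.log (G ^ (-α)) ≤ Real.log ((SN α N ω).toReal) :=
    Real.log_le_log (Real.rpow_pos_of_pos hGpos _) htoReal
  have hT : (∑ i : Fin N, ((j i - prevJ j i : ℕ) : ℝ)) = (t (N - 1) : ℝ) := by
    have h1 : ∀ i : Fin N, j i - prevJ j i
        = (fun k => t k - (if k = 0 then 0 else t (k - 1))) (i : ℕ) := by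
      intro i; rw [hprev i]
    have hnat : (∑ i : Fin N, (j i - prevJ j i)) = t (N - 1) := by
      rw [Finset.sum_congr rfl (fun i _ => h1 i),
        Fin.sum_univ_eq_sum_range (fun k => t k - (if k = 0 then 0 else t (k - 1))) N,
        telescope_nat ht.monotone N hN]
    rw [← Nat.cast_sum, hnat]
  have hAM : G ^ ((N : ℝ)⁻¹) ≤ (t (N - 1) : ℝ) / N := by
    have ham := Real.geom_mean_le_arith_mean_weighted Finset.univ (fun _ : Fin N => (N : ℝ)⁻¹)
      (fun i => ((j i - prevJ j i : ℕ) : ℝ)) (fun i _ => by positivity)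
      (by rw [Finset.sum_const, Finset.card_univ, Fintype.card_fin, nsmul_eq_mul]
          field_simp)
      (fun i _ => Nat.cast_nonneg _)
    rw [Real.finset_prod_rpow _ _ (fun i _ => Nat.cast_nonneg _) _, ← Finset.mul_sum, hT] at ham
    calc G ^ ((N : ℝ)⁻¹) ≤ (N : ℝ)⁻¹ * (t (N - 1) : ℝ) := ham
      _ = (t (N - 1) : ℝ) / N := by ring
  have hlogG_le : Real.log G ≤ N * Real.log ((t (N - 1) : ℝ) / N) := by
    have h2 : Real.log (G ^ ((N : ℝ)⁻¹)) ≤ Real.log ((t (N - 1) : ℝ) / N) :=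
      Real.log_le_log (Real.rpow_pos_of_pos hGpos _) hAM
    rw [Real.log_rpow hGpos] at h2
    have h3 := mul_le_mul_of_nonneg_left h2 hN0.le
    rw [← mul_assoc, mul_inv_cancel₀ hN0.ne', one_mul] at h3
    exact h3
  refine ⟨hSNpos, ?_⟩
  calc -(α * N * Real.log ((t (N - 1) : ℝ) / N)) ≤ -α * Real.log G := by
        nlinarith [mul_le_mul_of_nonneg_left hlogG_le hα.le]
    _ = Real.log (G ^ (-α)) := (Real.log_rpow hGpos _).symm
    _ ≤ _ := hlog1


/-! ### Markov + Borel–Cantelli for fixed `β` and `ε` -/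

lemma ae_eventually_SN_lt (μ : Measure Ω) [IsProbabilityMeasure μ] (X : ℕ → Ω → Bool)
    (hmeas : ∀ l, Measurable (X l)) (hindep : iIndepFun X μ)
    (p : ℝ) (hp : p ∈ Set.Ioo (0:ℝ) 1) (hX : ∀ l, μ {a | X l a = true} = ENNReal.ofReal p)
    (α : ℝ) (hα : 1 < α) (β : ℝ) (hβl : 1 / α < β) (hβ1 : β ≤ 1) {ε : ℝ} (hε : 0 < ε) :
    ∀ᵐ a ∂μ, ∀ᶠ N : ℕ in atTop, SN α N (fun l => X l a)
      < ENNReal.ofReal (Real.exp ((((1/β) * (Real.log p + Real.log (zetaR (α*β)))) + ε) * N)) := by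
  have hα0 : 0 < α := lt_trans one_pos hα
  have hβ0 : 0 < β := lt_trans (by positivity) hβl
  have hαβ : 1 < α * β := by
    rw [div_lt_iff₀ hα0] at hβl
    nlinarith
  set L : ℝ := (1/β) * (Real.log p + Real.log (zetaR (α*β))) with hL
  set q : ℝ := p * zetaR (α*β) with hq
  have hζpos : 0 < zetaR (α*β) := zetaR_pos hαβ
  have hqpos : 0 < q := mul_pos hp.1 hζpos
  have hlogq : Real.log q = β * L := by
    rw [hq, Real.log_mul (ne_of_gt hp.1) (ne_of_gt hζpos), hL]
    field_simp
  have hsum : (∑' N : ℕ, μ {a | ENNReal.ofReal (Real.exp ((L + ε) * N))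
      ≤ SN α N (fun l => X l a)}) ≠ ∞ := by
    have hbound : ∀ N : ℕ, μ {a | ENNReal.ofReal (Real.exp ((L + ε) * N))
        ≤ SN α N (fun l => X l a)} ≤ ENNReal.ofReal (Real.exp (-(β * ε)) ^ N) := by
      intro N
      have hmono : {a | ENNReal.ofReal (Real.exp ((L + ε) * N)) ≤ SN α N (fun l => X l a)}
          ⊆ {a | ENNReal.ofReal (Real.exp ((L + ε) * N * β))
            ≤ (SN α N (fun l => X l a)) ^ β} := by
        intro a ha
        have h2 : (ENNReal.ofReal (Real.exp ((L + ε) * N))) ^ β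
            ≤ (SN α N (fun l => X l a)) ^ β := ENNReal.rpow_le_rpow ha hβ0.le
        rwa [ENNReal.ofReal_rpow_of_pos (Real.exp_pos _), ← Real.exp_mul] at h2
      refine (measure_mono hmono).trans ?_
      have hmark := meas_ge_le_lintegral_div
        (μ := μ) (f := fun a => (SN α N (fun l => X l a)) ^ β)
        ((ENNReal.continuous_rpow_const.measurable.comp (measurable_SN X hmeas α N)).aemeasurable)
        (ε := ENNReal.ofReal (Real.exp ((L + ε) * N * β)))
        ((ENNReal.ofReal_pos.2 (Real.exp_pos _)).ne') ENNReal.ofReal_ne_top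
      refine hmark.trans ?_
      have hint := lintegral_SN_rpow_le μ X hmeas hindep p hX α β hβ0 hβ1 N
      refine (ENNReal.div_le_div_right hint _).trans (le_of_eq ?_)
      rw [ZE_eq hαβ, ← ENNReal.ofReal_mul hp.1.le, ← hq, ← ENNReal.ofReal_pow hqpos.le,
        ← ENNReal.ofReal_div_of_pos (Real.exp_pos _)]
      congr 1
      rw [← Real.exp_log hqpos, ← Real.exp_nat_mul, ← Real.exp_nat_mul, ← Real.exp_sub]
      congr 1
      rw [hlogq]
      ring
    refine ne_top_of_le_ne_top ?_ (ENNReal.tsum_le_tsum hbound)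
    rw [← ENNReal.ofReal_tsum_of_nonneg (fun N => pow_nonneg (Real.exp_nonneg _) N)
      (summable_geometric_of_lt_one (Real.exp_nonneg _)
        (Real.exp_lt_one_iff.2 (by nlinarith)))]
    exact ENNReal.ofReal_ne_top
  have hfreq := measure_setOf_frequently_eq_zero (μ := μ) hsum
  have hae : ∀ᵐ a ∂μ, ¬ ∃ᶠ N : ℕ in atTop, ENNReal.ofReal (Real.exp ((L + ε) * N))
      ≤ SN α N (fun l => X l a) := by
    rw [ae_iff]
    simpa only [not_not] using hfreq
  filter_upwards [hae] with a ha
  rw [Filter.not_frequently] at ha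
  filter_upwards [ha] with N hN
  exact not_le.1 hN

/-! ### The strong law event -/

lemma ae_good (μ : Measure Ω) [IsProbabilityMeasure μ] (X : ℕ → Ω → Bool)
    (hmeas : ∀ l, Measurable (X l)) (hindep : iIndepFun X μ)
    (p : ℝ) (hp : p ∈ Set.Ioo (0:ℝ) 1) (hX : ∀ l, μ {a | X l a = true} = ENNReal.ofReal p)
    (α : ℝ) (hα : 1 < α) :
    ∀ᵐ a ∂μ, ∀ᶠ N : ℕ in atTop,
      0 < (SN α N (fun l => X l a)).toReal ∧
      -(α * Real.log (4 / p)) ≤ Real.log ((SN α N (fun l => X l a)).toReal) / N := by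
  classical
  set g : Bool → ℝ := fun b => if b = true then 1 else 0 with hgdef
  have hgmeas : Measurable g := fun s _ => trivial
  set Y : ℕ → Ω → ℝ := fun l => g ∘ X l with hYdef
  have hXident : ∀ l, IdentDistrib (X l) (X 0) μ μ := by
    intro l
    refine ⟨(hmeas l).aemeasurable, (hmeas 0).aemeasurable, ?_⟩
    have key : ∀ m, ∀ s : Set Bool, μ (X m ⁻¹' s)
        = (if true ∈ s then ENNReal.ofReal p else 0)
          + (if false ∈ s then 1 - ENNReal.ofReal p else 0) := by
      intro m s
      have htrue : X m ⁻¹' {true} = {a | X m a = true} := rfl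
      have hfalse : X m ⁻¹' {false} = {a | X m a = true}ᶜ := by
        ext a
        simp [Bool.not_eq_true]
      have hmsset : MeasurableSet {a | X m a = true} := (hmeas m) (measurableSet_singleton true)
      by_cases h1 : true ∈ s <;> by_cases h2 : false ∈ s
      · have hsu : s = Set.univ := by
          ext b; cases b <;> simp [h1, h2]
        rw [hsu, Set.preimage_univ, measure_univ, if_pos (Set.mem_univ true),
          if_pos (Set.mem_univ false)]
        exact (add_tsub_cancel_of_le (ENNReal.ofReal_le_one.2 hp.2.le)).symm
      · have hsu : s = {true} := by ext b; cases b <;> simp [h1, h2]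
        rw [hsu, htrue, hX m, if_pos (Set.mem_singleton true),
          if_neg (by simp : ¬ (false ∈ ({true} : Set Bool))), add_zero]
      · have hsu : s = {false} := by ext b; cases b <;> simp [h1, h2]
        rw [hsu, hfalse, measure_compl hmsset (measure_ne_top μ _), measure_univ, hX m,
          if_neg (by simp : ¬ (true ∈ ({false} : Set Bool))),
          if_pos (Set.mem_singleton false), zero_add]
      · have hsu : s = ∅ := by ext b; cases b <;> simp [h1, h2]
        rw [hsu, Set.preimage_empty, measure_empty, if_neg (Set.notMem_empty true),
          if_neg (Set.notMem_empty false), add_zero]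
    refine Measure.ext fun s hs => ?_
    rw [Measure.map_apply (hmeas l) hs, Measure.map_apply (hmeas 0) hs, key l s, key 0 s]
  have hident : ∀ l, IdentDistrib (Y l) (Y 0) μ μ := fun l => (hXident l).comp hgmeas
  have hindepY : Pairwise (Function.onFun (IndepFun · · μ) Y) := fun i j hij =>
    (hindep.comp (fun _ => g) (fun _ => hgmeas)).indepFun hij
  have hYind : Y 0 = Set.indicator {a | X 0 a = true} (fun _ => (1:ℝ)) := by
    funext a
    by_cases h : X 0 a = true <;>
      simp [hYdef, hgdef, Set.indicator_apply, h, Function.comp]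
  have hmeasset : MeasurableSet {a | X 0 a = true} := (hmeas 0) (measurableSet_singleton true)
  have hint : Integrable (Y 0) μ := by
    rw [hYind]
    exact (integrable_const (1:ℝ)).indicator hmeasset
  have hexp : μ[Y 0] = p := by
    rw [hYind, integral_indicator_const (1:ℝ) hmeasset, measureReal_def, hX 0, smul_eq_mul, mul_one,
      ENNReal.toReal_ofReal hp.1.le]
  have hslln := strong_law_ae Y hint hindepY hident
  rw [hexp] at hslln
  filter_upwards [hslln] with a ha
  set q : ℕ → Prop := fun l => X l a = true with hqdef
  have hcount : ∀ n, (∑ i ∈ Finset.range n, Y i a) = (Nat.count q n : ℝ) := by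
    intro n
    rw [Nat.count_eq_card_filter_range, ← Finset.sum_boole]
    rfl
  have ha' : Tendsto (fun n : ℕ => (Nat.count q n : ℝ) / n) atTop (nhds p) :=
    ha.congr fun n => by rw [smul_eq_mul, hcount n, inv_mul_eq_div]
  have hev2 : ∀ᶠ n : ℕ in atTop, p / 2 * n ≤ (Nat.count q n : ℝ) := by
    have h1 : ∀ᶠ n : ℕ in atTop, p / 2 < (Nat.count q n : ℝ) / n :=
      (tendsto_order.1 ha').1 (p/2) (by linarith [hp.1])
    filter_upwards [h1, eventually_ge_atTop 1] with n hn hn1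
    have hn0 : (0:ℝ) < n := by exact_mod_cast hn1
    exact ((lt_div_iff₀ hn0).1 hn).le
  set q' : ℕ → Prop := fun l => 1 ≤ l ∧ X l a = true with hq'def
  have hcount_le : ∀ n, Nat.count q n ≤ Nat.count q' n + 1 := by
    intro n
    rw [Nat.count_eq_card_filter_range, Nat.count_eq_card_filter_range]
    have hsub : (Finset.range n).filter q ⊆ insert 0 ((Finset.range n).filter q') := by
      intro l hl
      rw [Finset.mem_filter] at hl
      rcases Nat.eq_zero_or_pos l with rfl | hl0
      · exact Finset.mem_insert_self _ _
      · exact Finset.mem_insert_of_mem (Finset.mem_filter.2 ⟨hl.1, hl0, hl.2⟩)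
    calc ((Finset.range n).filter q).card ≤ _ := Finset.card_le_card hsub
      _ ≤ ((Finset.range n).filter q').card + 1 := Finset.card_insert_le _ _
  obtain ⟨M, hM⟩ := eventually_atTop.1 hev2
  have hinf : (setOf q').Infinite := by
    by_contra hfin
    rw [Set.not_infinite] at hfin
    obtain ⟨C, hC⟩ := hfin.bddAbove
    have hcb : ∀ n, Nat.count q' n ≤ C + 1 := by
      intro n
      rw [Nat.count_eq_card_filter_range]
      have hss : (Finset.range n).filter q' ⊆ Finset.range (C+1) := by
        intro l hl
        rw [Finset.mem_filter] at hl
        have := hC hl.2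
        exact Finset.mem_range.2 (by omega)
      calc _ ≤ (Finset.range (C+1)).card := Finset.card_le_card hss
        _ = C + 1 := Finset.card_range _
    obtain ⟨n₀, hn₀⟩ := exists_nat_gt (((C:ℝ) + 3) * (2 / p))
    have h1 := hM (max M n₀) (le_max_left _ _)
    have h2n : Nat.count q (max M n₀) ≤ C + 2 := (hcount_le _).trans (by
      have := hcb (max M n₀); omega)
    have h2 : (Nat.count q (max M n₀) : ℝ) ≤ (C:ℝ) + 2 := by exact_mod_cast h2n
    have h3 : (n₀ : ℝ) ≤ (max M n₀ : ℕ) := by exact_mod_cast le_max_right M n₀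
    have h4 : ((C:ℝ) + 3) * (2 / p) < (max M n₀ : ℕ) := lt_of_lt_of_le hn₀ h3
    have h5 : (0:ℝ) < p / 2 := by linarith [hp.1]
    have h6 := mul_lt_mul_of_pos_left h4 h5
    have heq : p / 2 * (((C:ℝ) + 3) * (2 / p)) = (C:ℝ) + 3 := by
      field_simp [hp.1.ne']
    rw [heq] at h6
    linarith
  set t : ℕ → ℕ := Nat.nth q' with htdef
  have htmono : StrictMono t := Nat.nth_strictMono hinf
  have ht0 : 1 ≤ t 0 := (Nat.nth_mem_of_infinite hinf 0).1
  have htω : ∀ k, X (t k) a = true := fun k => (Nat.nth_mem_of_infinite hinf k).2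
  have hcount_t : ∀ k, Nat.count q' (t k + 1) = k + 1 := by
    intro k
    rw [Nat.count_succ, Nat.count_nth_of_infinite hinf,
      if_pos (Nat.nth_mem_of_infinite hinf k)]
  have htb : ∀ᶠ N : ℕ in atTop, (t (N - 1) : ℝ) ≤ 4 / p * N := by
    rw [eventually_atTop]
    refine ⟨M + 2, fun N hN => ?_⟩
    have hN1 : 1 ≤ N := by omega
    have hle1 : N - 1 ≤ t (N - 1) := htmono.le_apply
    have hge : M ≤ t (N - 1) + 1 := by omega
    have h1 := hM (t (N - 1) + 1) hge
    have h2 : Nat.count q (t (N - 1) + 1) ≤ N + 1 := by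
      have h3 := hcount_le (t (N - 1) + 1)
      rw [hcount_t (N - 1)] at h3
      omega
    have h2' : (Nat.count q (t (N-1) + 1) : ℝ) ≤ (N:ℝ) + 1 := by exact_mod_cast h2
    have h3 : p / 2 * ((t (N-1) : ℝ) + 1) ≤ (N:ℝ) + 1 := by
      have h4 := h1.trans h2'
      push_cast at h4 ⊢
      linarith
    have hNc : (1:ℝ) ≤ (N:ℝ) := by exact_mod_cast hN1
    rw [show 4 / p * (N:ℝ) = 4 * N / p by ring, le_div_iff₀ hp.1]
    nlinarith [hp.1, hNc, h3]
  filter_upwards [htb, eventually_ge_atTop 1] with N hNt hN1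
  have hNr : (0:ℝ) < N := by exact_mod_cast hN1
  obtain ⟨hpos, hlog⟩ := log_SN_lower (ω := fun l => X l a) (by linarith : (0:ℝ) < α) hN1
    (SN_ne_top hα N _) htmono ht0 htω
  refine ⟨hpos, ?_⟩
  have ht1 : (1:ℝ) ≤ (t (N-1) : ℝ) := by
    exact_mod_cast le_trans ht0 (htmono.monotone (Nat.zero_le _))
  have hTd : 0 < (t (N-1) : ℝ) / N := by positivity
  have hlog2 : Real.log ((t (N-1):ℝ)/N) ≤ Real.log (4/p) := by
    apply Real.log_le_log hTd
    rw [div_le_iff₀ hNr]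
    exact hNt.trans (le_of_eq (by ring))
  rw [le_div_iff₀ hNr]
  calc -(α * Real.log (4/p)) * N = -(α * N * Real.log (4/p)) := by ring
    _ ≤ -(α * N * Real.log ((t (N-1):ℝ)/N)) :=
        neg_le_neg (mul_le_mul_of_nonneg_left hlog2 (by positivity))
    _ ≤ _ := hlog

/-! ### Continuity of `zetaR` -/

lemma continuousAt_zetaR {s₀ : ℝ} (h : 1 < s₀) : ContinuousAt zetaR s₀ := by
  set r : ℝ := (1 + s₀) / 2 with hr
  have hr1 : 1 < r := by rw [hr]; linarith
  have hrs : r < s₀ := by rw [hr]; linarith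
  have hcont : ContinuousOn (fun x => ∑' n : ℕ, ((n + 1 : ℕ) : ℝ) ^ (-x)) (Set.Ici r) := by
    refine continuousOn_tsum (fun n => ?_) (summable_zeta hr1) (fun n x hx => ?_)
    · have hfun : (fun x : ℝ => ((n + 1 : ℕ) : ℝ) ^ (-x))
          = fun x => Real.exp (Real.log ((n + 1 : ℕ) : ℝ) * (-x)) := by
        funext x
        rw [Real.rpow_def_of_pos (by positivity)]
      rw [hfun]
      exact (Real.continuous_exp.comp (continuous_const.mul continuous_neg)).continuousOn
    · rw [Real.norm_eq_abs, abs_of_nonneg (Real.rpow_nonneg (by positivity) _)]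
      refine Real.rpow_le_rpow_of_exponent_le ?_ (neg_le_neg hx)
      exact_mod_cast Nat.succ_le_succ (Nat.zero_le n)
  have hz : zetaR = fun x => ∑' n : ℕ, ((n + 1 : ℕ) : ℝ) ^ (-x) := rfl
  rw [hz]
  exact hcont.continuousAt (Ici_mem_nhds hrs)

end Prob

end LimsupSNAux

/-- **Almost sure limsup bound**: a.s., for every `β ∈ (1/α, 1]`,
`limsup (1/N) log S_N(ω) ≤ (1/β)(log p + log ζ(αβ))`. -/
theorem limsup_log_SN_le
    {Ω : Type*} [MeasurableSpace Ω] (μ : Measure Ω) [IsProbabilityMeasure μ]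
    (X : ℕ → Ω → Bool)
    (hmeas : ∀ l, Measurable (X l))
    (hindep : iIndepFun X μ)
    (p : ℝ) (hp : p ∈ Set.Ioo (0 : ℝ) 1)
    (hX : ∀ l, μ {a | X l a = true} = ENNReal.ofReal p)
    (α : ℝ) (hα : 1 < α) :
    ∀ᵐ a ∂μ, ∀ β ∈ Set.Ioc (1 / α) (1 : ℝ),
      Filter.limsup
        (fun N : ℕ => Real.log ((SN α N (fun l => X l a)).toReal) / N) atTop
        ≤ (1 / β) * (Real.log p + Real.log (zetaR (α * β))) := by
  classical
  have hα0 : 0 < α := lt_trans one_pos hα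
  set u : Ω → ℕ → ℝ := fun a N => Real.log ((SN α N (fun l => X l a)).toReal) / N with hu
  set f : ℝ → ℝ := fun β => (1 / β) * (Real.log p + Real.log (zetaR (α * β))) with hf
  have key : ∀ β : ℝ, 1/α < β → β ≤ 1 → ∀ᵐ a ∂μ,
      ((∀ᶠ N : ℕ in atTop, 0 < (SN α N (fun l => X l a)).toReal ∧
        -(α * Real.log (4 / p)) ≤ u a N) →
      Filter.limsup (u a) atTop ≤ f β) := by
    intro β hβl hβ1
    have hBCall : ∀ᵐ a ∂μ, ∀ m : ℕ, ∀ᶠ N : ℕ in atTop, SN α N (fun l => X l a)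
        < ENNReal.ofReal (Real.exp ((f β + 1/((m:ℝ)+1)) * N)) := by
      rw [ae_all_iff]
      intro m
      exact LimsupSNAux.ae_eventually_SN_lt μ X hmeas hindep p hp hX α hα β hβl hβ1
        (by positivity : (0:ℝ) < 1/((m:ℝ)+1))
    filter_upwards [hBCall] with a hBC hgood
    have hcb : IsCoboundedUnder (· ≤ ·) atTop (u a) :=
      isCoboundedUnder_le_of_eventually_le atTop (x := -(α * Real.log (4 / p)))
        (hgood.mono fun N hN => hN.2)
    have hle : ∀ m : ℕ, Filter.limsup (u a) atTop ≤ f β + 1/((m:ℝ)+1) := by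
      intro m
      refine Filter.limsup_le_of_le hcb ?_
      filter_upwards [hBC m, hgood, eventually_ge_atTop 1] with N hlt hg hN1
      have hNr : (0:ℝ) < N := by exact_mod_cast hN1
      have htop := LimsupSNAux.SN_ne_top hα N (fun l => X l a)
      have h2 : (SN α N (fun l => X l a)).toReal
          < Real.exp ((f β + 1/((m:ℝ)+1)) * N) :=
        (ENNReal.lt_ofReal_iff_toReal_lt htop).1 hlt
      have h3 : Real.log ((SN α N (fun l => X l a)).toReal) ≤ (f β + 1/((m:ℝ)+1)) * N :=
        ((Real.log_lt_iff_lt_exp hg.1).2 h2).le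
      calc u a N = Real.log ((SN α N (fun l => X l a)).toReal) / N := rfl
        _ ≤ f β + 1/((m:ℝ)+1) := by rw [div_le_iff₀ hNr]; exact h3
    have htend : Tendsto (fun m : ℕ => f β + 1/((m:ℝ)+1)) atTop (nhds (f β)) := by
      have h0 := tendsto_one_div_add_atTop_nhds_zero_nat (𝕜 := ℝ)
      simpa using (tendsto_const_nhds (x := f β)).add h0
    exact ge_of_tendsto' htend hle
  have hQ : ∀ᵐ a ∂μ, ∀ qq : ℚ, ((qq:ℝ) ∈ Set.Ioc (1/α) 1) →
      ((∀ᶠ N : ℕ in atTop, 0 < (SN α N (fun l => X l a)).toReal ∧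
        -(α * Real.log (4 / p)) ≤ u a N) →
      Filter.limsup (u a) atTop ≤ f (qq:ℝ)) := by
    rw [ae_all_iff]
    intro qq
    by_cases hq : (qq:ℝ) ∈ Set.Ioc (1/α) 1
    · filter_upwards [key (qq:ℝ) hq.1 hq.2] with a hk _ hgood
      exact hk hgood
    · filter_upwards with a hmem
      exact absurd hmem hq
  filter_upwards [LimsupSNAux.ae_good μ X hmeas hindep p hp hX α hα, hQ,
    key 1 ((div_lt_one hα0).2 hα) le_rfl] with a hgood hq h1
  intro β hβ
  rcases eq_or_lt_of_le hβ.2 with heq | hβlt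
  · subst heq
    exact h1 hgood
  · have hβ0 : 0 < β := lt_trans (by positivity) hβ.1
    have hαβ : 1 < α * β := by
      have h := (div_lt_iff₀ hα0).1 hβ.1
      have h2 : β * α = α * β := mul_comm β α
      linarith
    have hcf : ContinuousAt f β := by
      rw [hf]
      apply ContinuousAt.mul
      · exact continuousAt_const.div continuousAt_id hβ0.ne'
      · apply ContinuousAt.add continuousAt_const
        have h1c : ContinuousAt (fun b : ℝ => α * b) β := continuousAt_const.mul continuousAt_id
        have h2c : ContinuousAt zetaR (α * β) := LimsupSNAux.continuousAt_zetaR hαβ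
        have h3c : ContinuousAt Real.log (zetaR (α * β)) :=
          Real.continuousAt_log (ne_of_gt (LimsupSNAux.zetaR_pos hαβ))
        exact (h3c.comp h2c).comp h1c
    have hch : ∀ n : ℕ, ∃ qq : ℚ, max (1/α) (β - 1/((n:ℝ)+1)) < (qq:ℝ) ∧ (qq:ℝ) < β :=
      fun n => exists_rat_btwn (max_lt hβ.1 (sub_lt_self β (by positivity)))
    choose qs hqs1 hqs2 using hch
    have hmem : ∀ n, ((qs n : ℝ)) ∈ Set.Ioc (1/α) 1 := fun n =>
      ⟨lt_of_le_of_lt (le_max_left _ _) (hqs1 n), ((hqs2 n).trans hβlt).le⟩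
    have hbound : ∀ n, Filter.limsup (u a) atTop ≤ f ((qs n : ℝ)) := fun n =>
      hq (qs n) (hmem n) hgood
    have htq : Tendsto (fun n : ℕ => ((qs n : ℝ))) atTop (nhds β) := by
      have hlow : Tendsto (fun n : ℕ => β - 1/((n:ℝ)+1)) atTop (nhds β) := by
        have h0 := tendsto_one_div_add_atTop_nhds_zero_nat (𝕜 := ℝ)
        simpa using (tendsto_const_nhds (x := β)).sub h0
      refine tendsto_of_tendsto_of_tendsto_of_le_of_le hlow tendsto_const_nhds ?_ ?_
      · exact fun n => ((le_max_right _ _).trans (hqs1 n).le)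
      · exact fun n => (hqs2 n).le
    have hfq : Tendsto (fun n => f ((qs n : ℝ))) atTop (nhds (f β)) := hcf.tendsto.comp htq
    exact ge_of_tendsto' hfq hbound

end
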